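/- Let z be an integer with z ≡ 3 (mod 7), and set α = 1 + z + 2zω and ρ = 2 + 3ω in ℤ[ω]. Then for every natural number r, ρ^r divides α in ℤ[ω] if and only if 7^r divides 3z² + 1 in ℤ. -/

import Mathlib

open Polynomial

/-- The ring of Eisenstein integers ℤ[ω] = ℤ[X]/(X² + X + 1). -/
abbrev Eisenstein : Type := AdjoinRoot (X ^ 2 + X + 1 : ℤ[X])

/-- ω, a primitive cube root of unity, satisfying ω² + ω + 1 = 0. -/
noncomputable def ω : Eisenstein := AdjoinRoot.root _

lemma Eis.monic : (X ^ 2 + X + 1 : ℤ[X]).Monic := by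
  have : (X ^ 2 + X + 1 : ℤ[X]) = X ^ 2 + (X + 1) := by ring
  rw [this]
  exact monic_X_pow_add (by
    have : (X + 1 : ℤ[X]).degree = 1 := by compute_degree!
    rw [this]; decide)

lemma Eis.deg : (X ^ 2 + X + 1 : ℤ[X]).degree = 2 := by compute_degree!

lemma omega_rel : ω ^ 2 + ω + 1 = 0 := by
  have h := AdjoinRoot.mk_self (f := (X ^ 2 + X + 1 : ℤ[X]))
  simpa [ω, map_add, map_pow, map_one, AdjoinRoot.mk_X] using h

instance : IsDomain Eisenstein := by
  have hirr : Irreducible (X ^ 2 + X + 1 : ℤ[X]) := by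
    have h := Polynomial.cyclotomic.irreducible (n := 3) (by norm_num)
    rwa [Polynomial.cyclotomic_three] at h
  have hprime : Prime (X ^ 2 + X + 1 : ℤ[X]) := hirr.prime
  have hP : (Ideal.span {(X ^ 2 + X + 1 : ℤ[X])}).IsPrime :=
    (Ideal.span_singleton_prime hprime.ne_zero).mpr hprime
  exact Ideal.Quotient.isDomain _

lemma exists_rep (x : Eisenstein) : ∃ a b : ℤ, x = a + b * ω := by
  induction x using AdjoinRoot.induction_on with
  | ih p =>
    set f : ℤ[X] := X ^ 2 + X + 1 with hf
    have hdvd : f ∣ p - p %ₘ f := by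
      refine ⟨p /ₘ f, ?_⟩
      have h := Polynomial.modByMonic_add_div p f
      linear_combination -h
    have h1 : AdjoinRoot.mk f p = AdjoinRoot.mk f (p %ₘ f) := AdjoinRoot.mk_eq_mk.mpr hdvd
    have hdeg : (p %ₘ f).degree ≤ 1 := by
      have h2 := Polynomial.degree_modByMonic_lt p Eis.monic
      rw [Eis.deg] at h2
      exact Order.lt_succ_iff.mp (by exact_mod_cast h2)
    refine ⟨(p %ₘ f).coeff 0, (p %ₘ f).coeff 1, ?_⟩
    conv_lhs => rw [h1, Polynomial.eq_X_add_C_of_degree_le_one hdeg]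
    simp only [map_add, map_mul, AdjoinRoot.mk_X, AdjoinRoot.mk_C, eq_intCast, map_intCast]
    show ((p %ₘ f).coeff 1 : Eisenstein) * AdjoinRoot.root f + _ = _
    rw [show AdjoinRoot.root f = ω from rfl]
    ring

lemma Eis.root4 : eval₂ (Int.castRingHom (ZMod 7)) 4 (X ^ 2 + X + 1 : ℤ[X]) = 0 := by
  simp only [eval₂_add, eval₂_pow, eval₂_X, eval₂_one]
  decide

lemma Eis.root2 : eval₂ (Int.castRingHom (ZMod 7)) 2 (X ^ 2 + X + 1 : ℤ[X]) = 0 := by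
  simp only [eval₂_add, eval₂_pow, eval₂_X, eval₂_one]
  decide

noncomputable def φ : Eisenstein →+* ZMod 7 :=
  AdjoinRoot.lift (Int.castRingHom (ZMod 7)) 4 Eis.root4

noncomputable def ψ : Eisenstein →+* ZMod 7 :=
  AdjoinRoot.lift (Int.castRingHom (ZMod 7)) 2 Eis.root2

lemma φ_omega : φ ω = 4 := AdjoinRoot.lift_root Eis.root4
lemma ψ_omega : ψ ω = 2 := AdjoinRoot.lift_root Eis.root2

lemma rho_ne_zero : ((2 : Eisenstein) + 3 * ω) ≠ 0 := by
  intro h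
  have := congrArg ψ h
  simp only [map_add, map_mul, map_ofNat, ψ_omega, map_zero] at this
  exact absurd this (by decide)

lemma seven_factor : (7 : Eisenstein) = ((2 : Eisenstein) + 3 * ω) * (-1 - 3 * ω) := by
  linear_combination (9 : Eisenstein) * omega_rel

lemma rho_dvd {x : Eisenstein} (h : φ x = 0) : ((2 : Eisenstein) + 3 * ω) ∣ x := by
  obtain ⟨a, b, rfl⟩ := exists_rep x
  simp only [map_add, map_mul, map_intCast, φ_omega] at h
  have h7 : (7 : ℤ) ∣ a + 4 * b := by
    have : ((a + 4 * b : ℤ) : ZMod 7) = 0 := by push_cast; linear_combination h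
    exact_mod_cast (ZMod.intCast_zmod_eq_zero_iff_dvd _ 7).mp this
  obtain ⟨m, hm⟩ := h7
  refine ⟨(m : Eisenstein) * (-1 - 3 * ω) - (b : Eisenstein) * (-1 - 2 * ω), ?_⟩
  have ha : (a : Eisenstein) = 7 * m - 4 * b := by
    have : (a : ℤ) = 7 * m - 4 * b := by linarith [hm]
    exact_mod_cast congrArg (Int.cast : ℤ → Eisenstein) this
  rw [ha]
  linear_combination (9 * (m : Eisenstein) - 6 * (b : Eisenstein)) * omega_rel

lemma key : ∀ r : ℕ, ∃ t : ℤ, (7 ∣ t - 4) ∧ ((7 : ℤ) ^ r ∣ t ^ 2 + t + 1) ∧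
    (((2 : Eisenstein) + 3 * ω) ^ r ∣ ((t : Eisenstein) - ω)) := by
  intro r
  induction r with
  | zero => exact ⟨4, by norm_num, by simp, by simp⟩
  | succ r ih =>
    obtain ⟨t, ht4, htm, hβd⟩ := ih
    rcases Nat.eq_zero_or_pos r with hr | hr
    · subst hr
      refine ⟨4, by norm_num, by norm_num, ?_⟩
      refine ⟨-1 - 2 * ω, ?_⟩
      push_cast
      linear_combination (6 : Eisenstein) * omega_rel
    · obtain ⟨n, rfl⟩ : ∃ n, r = n + 1 := ⟨r - 1, by omega⟩
      obtain ⟨m, hm⟩ := htm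
      obtain ⟨s, hs⟩ := ht4
      obtain ⟨β, hβ⟩ := hβd
      refine ⟨t + 7 ^ (n + 1) * (-(4 * m)), ?_, ?_, ?_⟩
      · refine ⟨s + 7 ^ n * (-(4 * m)), ?_⟩; rw [pow_succ]; linarith [hs]
      · refine ⟨-m * (5 + 8 * s) + 7 ^ n * (-(4 * m)) ^ 2, ?_⟩
        linear_combination hm - 8 * 7 ^ (n + 1) * m * hs
      · -- Eisenstein part
        have hne : ((2 : Eisenstein) + 3 * ω) ^ (n + 1) ≠ 0 := pow_ne_zero _ rho_ne_zero
        have hβ' : β * ((t : Eisenstein) + 1 + ω) = (-1 - 3 * ω) ^ (n + 1) * (m : Eisenstein) := by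
          apply mul_left_cancel₀ hne
          have h1 : ((t : Eisenstein) - ω) * ((t : Eisenstein) + 1 + ω)
              = ((t ^ 2 + t + 1 : ℤ) : Eisenstein) := by
            push_cast
            linear_combination -omega_rel
          calc ((2 : Eisenstein) + 3 * ω) ^ (n + 1) * (β * ((t : Eisenstein) + 1 + ω))
              = (((t : Eisenstein) - ω)) * ((t : Eisenstein) + 1 + ω) := by rw [hβ]; ring
            _ = ((t ^ 2 + t + 1 : ℤ) : Eisenstein) := h1
            _ = ((7 ^ (n + 1) * m : ℤ) : Eisenstein) := by rw [hm]
            _ = (7 : Eisenstein) ^ (n + 1) * (m : Eisenstein) := by push_cast; ring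
            _ = ((2 : Eisenstein) + 3 * ω) ^ (n + 1)
                * ((-1 - 3 * ω) ^ (n + 1) * (m : Eisenstein)) := by
                rw [seven_factor, mul_pow]; ring
        have ht7 : ((t : ℤ) : ZMod 7) = 4 := by
          have h0 : ((t - 4 : ℤ) : ZMod 7) = 0 :=
            (ZMod.intCast_zmod_eq_zero_iff_dvd _ 7).mpr (by exact_mod_cast (⟨s, hs⟩ : (7 : ℤ) ∣ (t - 4)))
          push_cast at h0
          linear_combination h0
        have hφβ : (9 : ZMod 7) * φ β = ((m : ℤ) : ZMod 7) := by
          have hc := congrArg φ hβ'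
          simp only [map_mul, map_add, map_pow, map_sub, map_neg, map_one, map_ofNat,
            map_intCast, φ_omega, ht7] at hc
          have h13 : ((-1 : ZMod 7) - 3 * 4) = 1 := by decide
          rw [h13, one_pow] at hc
          have h9 : ((4 : ZMod 7) + 1 + 4) = 9 := by decide
          rw [h9] at hc
          linear_combination hc
        have hdvd : ((2 : Eisenstein) + 3 * ω) ∣
            (β + (-1 - 3 * ω) ^ (n + 1) * ((-(4 * m) : ℤ) : Eisenstein)) := by
          apply rho_dvd
          simp only [map_add, map_mul, map_pow, map_sub, map_neg, map_one, map_ofNat,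
            map_intCast, φ_omega]
          have h13 : ((-1 : ZMod 7) - 3 * 4) = 1 := by decide
          rw [h13, one_pow]
          have h35 : (35 : ZMod 7) = 0 := by decide
          push_cast
          linear_combination 4 * hφβ - φ β * h35
        obtain ⟨γ, hγ⟩ := hdvd
        refine ⟨γ, ?_⟩
        have h7r : (7 : Eisenstein) ^ (n + 1)
            = ((2 : Eisenstein) + 3 * ω) ^ (n + 1) * (-1 - 3 * ω) ^ (n + 1) := by
          rw [seven_factor, mul_pow]
        push_cast
        push_cast at hγ
        linear_combination hβ + ((2 : Eisenstein) + 3 * ω) ^ (n + 1) * hγ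
          + (-(4 * (m : Eisenstein))) * h7r

theorem rho_pow_dvd_alpha_iff (z : ℤ) (hz : z ≡ 3 [ZMOD 7]) :
    ∀ r : ℕ,
      ((2 : Eisenstein) + 3 * ω) ^ r ∣ (1 + (z : Eisenstein) + 2 * (z : Eisenstein) * ω) ↔
      (7 : ℤ) ^ r ∣ 3 * z ^ 2 + 1 := by
  intro r
  obtain ⟨t, ht4, htm, hβd⟩ := key r
  obtain ⟨s, hs⟩ := ht4
  have hz7 : (7 : ℤ) ∣ z - 3 := Int.ModEq.dvd hz.symm
  obtain ⟨a, ha⟩ := hz7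
  have hct : (7 : ℤ) ∣ 2 + 3 * t := ⟨2 + 3 * s, by linarith [hs]⟩
  constructor
  · intro hα
    have hroot : eval₂ (Int.castRingHom (ZMod (7 ^ r))) ((t : ℤ) : ZMod (7 ^ r))
        (X ^ 2 + X + 1 : ℤ[X]) = 0 := by
      simp only [eval₂_add, eval₂_pow, eval₂_X, eval₂_one]
      have h0 : ((t ^ 2 + t + 1 : ℤ) : ZMod (7 ^ r)) = 0 := by
        rw [ZMod.intCast_zmod_eq_zero_iff_dvd]
        push_cast
        exact htm
      push_cast at h0
      linear_combination h0
    set φr := AdjoinRoot.lift (Int.castRingHom (ZMod (7 ^ r))) ((t : ℤ) : ZMod (7 ^ r)) hroot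
      with hφr
    have hφω : φr ω = ((t : ℤ) : ZMod (7 ^ r)) := AdjoinRoot.lift_root hroot
    obtain ⟨c, hc⟩ := hα
    have h0 : φr (1 + (z : Eisenstein) + 2 * (z : Eisenstein) * ω) = 0 := by
      rw [hc, map_mul, map_pow]
      have hrz : φr ((2 : Eisenstein) + 3 * ω) ^ r = 0 := by
        have he : φr ((2 : Eisenstein) + 3 * ω) = ((2 + 3 * t : ℤ) : ZMod (7 ^ r)) := by
          simp only [map_add, map_mul, map_ofNat, hφω]; push_cast; ring
        rw [he, ← Int.cast_pow, ZMod.intCast_zmod_eq_zero_iff_dvd]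
        push_cast
        exact pow_dvd_pow_of_dvd hct r
      rw [hrz, zero_mul]
    have h1 : ((1 + z + 2 * z * t : ℤ) : ZMod (7 ^ r)) = 0 := by
      rw [← h0]
      simp only [map_add, map_mul, map_one, map_ofNat, map_intCast, hφω]
      push_cast
      ring
    have h2 : (7 : ℤ) ^ r ∣ 1 + z + 2 * z * t := by
      have h3 := (ZMod.intCast_zmod_eq_zero_iff_dvd _ _).mp h1
      exact_mod_cast h3
    have hid : 3 * z ^ 2 + 1
        = (1 + z + 2 * z * t) * (1 - z - 2 * z * t) + 4 * z ^ 2 * (t ^ 2 + t + 1) := by ring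
    rw [hid]
    exact dvd_add (h2.mul_right _) (htm.mul_left _)
  · intro h7
    have hnd : ¬ (7 : ℤ) ∣ (1 - z - 2 * z * t) := by
      have hform : 1 - z - 2 * z * t = 7 * (-4 - 9 * a - 6 * s - 14 * a * s) + 2 := by
        linear_combination (-1 - 2 * t) * ha + (-(6 + 14 * a)) * hs
      rintro ⟨d, hd⟩
      omega
    have hcop : IsCoprime ((7 : ℤ) ^ r) (1 - z - 2 * z * t) :=
      (((by norm_num : Prime (7 : ℤ)).coprime_iff_not_dvd).mpr hnd).pow_left
    have hprod : (7 : ℤ) ^ r ∣ (1 + z + 2 * z * t) * (1 - z - 2 * z * t) := by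
      have hid : (1 + z + 2 * z * t) * (1 - z - 2 * z * t)
          = (3 * z ^ 2 + 1) - 4 * z ^ 2 * (t ^ 2 + t + 1) := by ring
      rw [hid]
      exact dvd_sub h7 (htm.mul_left _)
    have hc : (7 : ℤ) ^ r ∣ 1 + z + 2 * z * t := hcop.dvd_of_dvd_mul_right hprod
    obtain ⟨d, hd⟩ := hc
    obtain ⟨β, hβ⟩ := hβd
    refine ⟨(-1 - 3 * ω) ^ r * (d : Eisenstein) - 2 * (z : Eisenstein) * β, ?_⟩
    have h7r : (7 : Eisenstein) ^ r = ((2 : Eisenstein) + 3 * ω) ^ r * (-1 - 3 * ω) ^ r := by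
      rw [seven_factor, mul_pow]
    have hdE : ((1 + z + 2 * z * t : ℤ) : Eisenstein) = ((7 ^ r * d : ℤ) : Eisenstein) := by
      exact_mod_cast congrArg (Int.cast : ℤ → Eisenstein) hd
    push_cast at hdE
    linear_combination hdE - 2 * (z : Eisenstein) * hβ + (d : Eisenstein) * h7r
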